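/- Characterisation of complex tight frames that give real tight frames: let V = [v_1,…,v_n] = V₁ + i·V₂ ∈ ℂ^{d×n} (V₁, V₂ real) satisfy V·Vᴴ = A·I_d for some real A > 0, and let V_ℝ ∈ ℝ^{2d×n} be the matrix stacking V₁ on top of V₂. Then V_ℝ·V_ℝᵀ = (A/2)·I_{2d} if and only if ∑_j ∑_k ⟨v_j, v_k⟩² = 0 (sum of the squares of the complex inner products), equivalently ∑_j ∑_k (Re⟨v_j, v_k⟩)² = ∑_j ∑_k (Im⟨v_j, v_k⟩)². -/

import Mathlib

open Matrix BigOperators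

/-- Euclidean inner product on `ℂ^d`: `⟨v,w⟩ = ∑ i, conj (w i) * v i`
(linear in the first variable). -/
noncomputable def cip {d : ℕ} (v w : Fin d → ℂ) : ℂ :=
  ∑ i, starRingEnd ℂ (w i) * v i

/-- Uniqueness of real/imaginary parts for matrices. -/
lemma reim_matrix_eq {m m' : Type*} (X Y X' Y' : Matrix m m' ℝ)
    (h : X.map (fun x : ℝ => (x : ℂ)) + Complex.I • Y.map (fun x : ℝ => (x : ℂ)) =
      X'.map (fun x : ℝ => (x : ℂ)) + Complex.I • Y'.map (fun x : ℝ => (x : ℂ))) :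
    X = X' ∧ Y = Y' := by
  constructor
  · ext i j
    have h' := congrArg Complex.re (congrFun (congrFun h i) j)
    simpa [Matrix.add_apply, Matrix.smul_apply, Matrix.map_apply, Complex.add_re,
      Complex.mul_re] using h'
  · ext i j
    have h' := congrArg Complex.im (congrFun (congrFun h i) j)
    simpa [Matrix.add_apply, Matrix.smul_apply, Matrix.map_apply, Complex.add_im,
      Complex.mul_im] using h'

/-- Characterisation of complex tight frames that give real tight frames:
if `V = V₁ + i V₂ ∈ ℂ^{d×n}` is a tight frame (`V Vᴴ = A I_d`, `A > 0`) and
`V_ℝ` stacks `V₁` on top of `V₂`, then `V_ℝ V_ℝᵀ = (A/2) I_{2d}` iff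
`∑_j ∑_k ⟨v_j,v_k⟩² = 0`, equivalently
`∑_j ∑_k (Re⟨v_j,v_k⟩)² = ∑_j ∑_k (Im⟨v_j,v_k⟩)²`. -/
theorem complex_tight_frame_gives_real_tight_frame_iff (d n : ℕ)
    (V₁ V₂ : Matrix (Fin d) (Fin n) ℝ) (A : ℝ) (hA : 0 < A)
    (V : Matrix (Fin d) (Fin n) ℂ)
    (hV : V = V₁.map (fun x => (x : ℂ)) + Complex.I • V₂.map (fun x => (x : ℂ)))
    (htight : V * Vᴴ = A • (1 : Matrix (Fin d) (Fin d) ℂ)) :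
    (Matrix.fromRows V₁ V₂ * (Matrix.fromRows V₁ V₂)ᵀ =
        (A / 2) • (1 : Matrix (Fin d ⊕ Fin d) (Fin d ⊕ Fin d) ℝ) ↔
      ∑ j, ∑ k, (cip (fun i => V i j) (fun i => V i k)) ^ 2 = 0) ∧
    (Matrix.fromRows V₁ V₂ * (Matrix.fromRows V₁ V₂)ᵀ =
        (A / 2) • (1 : Matrix (Fin d ⊕ Fin d) (Fin d ⊕ Fin d) ℝ) ↔
      ∑ j, ∑ k, ((cip (fun i => V i j) (fun i => V i k)).re) ^ 2 =
        ∑ j, ∑ k, ((cip (fun i => V i j) (fun i => V i k)).im) ^ 2) := by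
  classical
  set P := V₁ * V₁ᵀ with hP
  set Q := V₂ * V₂ᵀ with hQ
  set R := V₁ * V₂ᵀ with hR
  set S := V₂ * V₁ᵀ with hS
  set M := V * Vᵀ with hMdef
  -- decomposition of V * Vᵀ
  have hM : M = (P - Q).map (fun x : ℝ => (x : ℂ)) +
      Complex.I • (R + S).map (fun x : ℝ => (x : ℂ)) := by
    ext i i'
    simp only [hMdef, Matrix.mul_apply, Matrix.add_apply, Matrix.smul_apply, Matrix.sub_apply,
      Matrix.map_apply, Matrix.transpose_apply, smul_eq_mul, hV, hP, hQ, hR, hS]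
    push_cast
    rw [mul_add, Finset.mul_sum, Finset.mul_sum, ← Finset.sum_sub_distrib,
      ← Finset.sum_add_distrib, ← Finset.sum_add_distrib]
    refine Finset.sum_congr rfl fun j _ => ?_
    have hI : Complex.I * Complex.I = -1 := Complex.I_mul_I
    ring_nf
    rw [Complex.I_sq]
    ring
  -- decomposition of V * Vᴴ
  have hH : V * Vᴴ = (P + Q).map (fun x : ℝ => (x : ℂ)) +
      Complex.I • (S - R).map (fun x : ℝ => (x : ℂ)) := by
    ext i i'
    simp only [Matrix.mul_apply, Matrix.add_apply, Matrix.smul_apply, Matrix.sub_apply,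
      Matrix.map_apply, Matrix.conjTranspose_apply, smul_eq_mul, hV, hP, hQ, hR, hS,
      Matrix.transpose_apply, star_add, star_mul', Complex.star_def, Complex.conj_ofReal,
      Complex.conj_I]
    push_cast
    rw [mul_sub, Finset.mul_sum, Finset.mul_sum, ← Finset.sum_add_distrib,
      ← Finset.sum_sub_distrib, ← Finset.sum_add_distrib]
    refine Finset.sum_congr rfl fun j _ => ?_
    ring_nf
    rw [Complex.I_sq]
    ring
  -- tight frame conditions on real/imag parts
  have hA1 : A • (1 : Matrix (Fin d) (Fin d) ℂ) =
      (A • (1 : Matrix (Fin d) (Fin d) ℝ)).map (fun x : ℝ => (x : ℂ)) +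
      Complex.I • (0 : Matrix (Fin d) (Fin d) ℝ).map (fun x : ℝ => (x : ℂ)) := by
    ext i i'
    by_cases h : i = i' <;>
      simp [Matrix.one_apply, h, Matrix.smul_apply, Matrix.map_apply]
  have htight' := reim_matrix_eq _ _ _ _ (hH.symm.trans (htight.trans hA1))
  have hPQ : P + Q = A • 1 := htight'.1
  have hSR : S - R = 0 := htight'.2
  -- block structure
  have hblock : Matrix.fromRows V₁ V₂ * (Matrix.fromRows V₁ V₂)ᵀ =
      Matrix.fromBlocks P R S Q := by
    rw [Matrix.transpose_fromRows, Matrix.fromRows_mul_fromCols]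
  have hones : (A / 2) • (1 : Matrix (Fin d ⊕ Fin d) (Fin d ⊕ Fin d) ℝ) =
      Matrix.fromBlocks ((A / 2) • 1) 0 0 ((A / 2) • 1) := by
    rw [← Matrix.fromBlocks_one, Matrix.fromBlocks_smul]; simp
  -- the real frame condition is equivalent to M = 0
  have key : (Matrix.fromRows V₁ V₂ * (Matrix.fromRows V₁ V₂)ᵀ =
      (A / 2) • (1 : Matrix (Fin d ⊕ Fin d) (Fin d ⊕ Fin d) ℝ)) ↔ M = 0 := by
    rw [hblock, hones, Matrix.fromBlocks_inj]
    constructor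
    · rintro ⟨h1, h2, h3, h4⟩
      rw [hM, h1, h4, h2, h3]
      simp
    · intro h
      have h0 : (P - Q).map (fun x : ℝ => (x : ℂ)) +
          Complex.I • (R + S).map (fun x : ℝ => (x : ℂ)) =
          (0 : Matrix (Fin d) (Fin d) ℝ).map (fun x : ℝ => (x : ℂ)) +
          Complex.I • (0 : Matrix (Fin d) (Fin d) ℝ).map (fun x : ℝ => (x : ℂ)) := by
        rw [← hM, h]; simp
      obtain ⟨hPQ0, hRS0⟩ := reim_matrix_eq _ _ _ _ h0
      have hPeqQ : P = Q := sub_eq_zero.mp hPQ0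
      have hReqS : S = R := sub_eq_zero.mp hSR
      have hP2 : P = (A / 2) • 1 := by
        have h2 : (2 : ℝ) • P = A • 1 := by
          rw [two_smul]; rw [hPeqQ] at hPQ ⊢; rw [← hPeqQ] at hPQ ⊢; exact hPQ
        have := congrArg (fun X => (2⁻¹ : ℝ) • X) h2
        simpa [smul_smul, div_eq_inv_mul] using this
      have hR0 : R = 0 := by
        have h2 : (2 : ℝ) • R = 0 := by
          rw [two_smul]; nth_rewrite 1 [← hReqS]; rw [add_comm]; exact hRS0
        have := congrArg (fun X => (2⁻¹ : ℝ) • X) h2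
        simpa [smul_smul] using this
      refine ⟨hP2, hR0, ?_, ?_⟩
      · rw [hReqS, hR0]
      · rw [← hPeqQ, hP2]
  -- the sum of squares of inner products
  set Cv := V.map (starRingEnd ℂ) with hCv
  set H := Vᵀ * Cv with hHdef
  have hcipH : ∀ j k, cip (fun i => V i j) (fun i => V i k) = H j k := by
    intro j k
    simp [cip, hHdef, hCv, Matrix.mul_apply, Matrix.map_apply, mul_comm]
  have hMsymm : Mᵀ = M := by
    rw [hMdef, Matrix.transpose_mul, Matrix.transpose_transpose]
  have hHH : H * Hᵀ = Vᵀ * (M.map (starRingEnd ℂ)) * V := by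
    rw [hHdef, Matrix.transpose_mul, hMdef, Matrix.map_mul (f := starRingEnd ℂ)]
    rw [← Matrix.transpose_map, hCv]
    rw [Matrix.mul_assoc, Matrix.mul_assoc, Matrix.mul_assoc, Matrix.transpose_transpose]
  have htrace : ∑ j, ∑ k, (H j k) ^ 2 = Matrix.trace (M * M.map (starRingEnd ℂ)) := by
    have t1 : ∑ j, ∑ k, (H j k) ^ 2 = Matrix.trace (H * Hᵀ) := by
      simp [Matrix.trace, Matrix.mul_apply, Matrix.diag, sq]
    rw [t1, hHH, Matrix.trace_mul_comm, ← Matrix.mul_assoc, ← hMdef]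
  have hfrob : Matrix.trace (M * M.map (starRingEnd ℂ)) =
      ((∑ i, ∑ i', Complex.normSq (M i i') : ℝ) : ℂ) := by
    push_cast
    simp only [Matrix.trace, Matrix.mul_apply, Matrix.diag, Matrix.map_apply]
    refine Finset.sum_congr rfl fun i _ => Finset.sum_congr rfl fun i' _ => ?_
    have : M i' i = M i i' := by rw [show M i' i = Mᵀ i i' from rfl, hMsymm]
    rw [this, Complex.mul_conj]
  have hsumform : ∑ j, ∑ k, (cip (fun i => V i j) (fun i => V i k)) ^ 2 =
      ((∑ i, ∑ i', Complex.normSq (M i i') : ℝ) : ℂ) := by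
    rw [← hfrob, ← htrace]
    exact Finset.sum_congr rfl fun j _ => Finset.sum_congr rfl fun k _ => by rw [hcipH]
  have hsum0 : (∑ j, ∑ k, (cip (fun i => V i j) (fun i => V i k)) ^ 2 = 0) ↔ M = 0 := by
    rw [hsumform]
    rw [show ((0 : ℂ) = ((0 : ℝ) : ℂ)) by norm_num, Complex.ofReal_inj]
    constructor
    · intro h
      ext i i'
      have h1 : ∀ i ∈ Finset.univ, (0 : ℝ) ≤ ∑ i', Complex.normSq (M i i') :=
        fun i _ => Finset.sum_nonneg fun i' _ => Complex.normSq_nonneg _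
      have h2 := (Finset.sum_eq_zero_iff_of_nonneg h1).mp h i (Finset.mem_univ i)
      have h3 := (Finset.sum_eq_zero_iff_of_nonneg
        (fun i' _ => Complex.normSq_nonneg (M i i'))).mp h2 i' (Finset.mem_univ i')
      simpa [Complex.normSq_eq_zero] using h3
    · intro h
      simp [h]
  -- symmetry: the sum is real
  have hsymm : ∀ j k, cip (fun i => V i k) (fun i => V i j) =
      starRingEnd ℂ (cip (fun i => V i j) (fun i => V i k)) := by
    intro j k
    simp only [cip, map_sum, _root_.map_mul, RingHomCompTriple.comp_apply, RingHom.id_apply,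
      Complex.conj_conj]
    exact Finset.sum_congr rfl fun i _ => by ring
  have him : (∑ j, ∑ k, (cip (fun i => V i j) (fun i => V i k)) ^ 2).im = 0 := by
    set f := fun j k => cip (fun i => V i j) (fun i => V i k) with hf
    have hexp : (∑ j, ∑ k, (f j k) ^ 2).im =
        ∑ j, ∑ k, ((f j k).re * (f j k).im + (f j k).im * (f j k).re) := by
      rw [Complex.im_sum]
      refine Finset.sum_congr rfl fun j _ => ?_
      rw [Complex.im_sum]
      exact Finset.sum_congr rfl fun k _ => by rw [sq, Complex.mul_im]
    rw [hexp]
    have hanti : ∀ j k, (f k j).re * (f k j).im + (f k j).im * (f k j).re =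
        -((f j k).re * (f j k).im + (f j k).im * (f j k).re) := by
      intro j k
      simp only [hf]
      rw [hsymm j k]
      simp [Complex.conj_re, Complex.conj_im]
      ring
    have hcomm : ∑ j, ∑ k, ((f j k).re * (f j k).im + (f j k).im * (f j k).re) =
        ∑ j, ∑ k, ((f k j).re * (f k j).im + (f k j).im * (f k j).re) :=
      Finset.sum_comm
    have : ∑ j, ∑ k, ((f j k).re * (f j k).im + (f j k).im * (f j k).re) =
        -∑ j, ∑ k, ((f j k).re * (f j k).im + (f j k).im * (f j k).re) := by
      nth_rewrite 1 [hcomm]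
      rw [← Finset.sum_neg_distrib]
      refine Finset.sum_congr rfl fun j _ => ?_
      rw [← Finset.sum_neg_distrib]
      exact Finset.sum_congr rfl fun k _ => hanti j k
    linarith [this]
  have hre : (∑ j, ∑ k, (cip (fun i => V i j) (fun i => V i k)) ^ 2).re =
      ∑ j, ∑ k, ((cip (fun i => V i j) (fun i => V i k)).re) ^ 2 -
      ∑ j, ∑ k, ((cip (fun i => V i j) (fun i => V i k)).im) ^ 2 := by
    rw [Complex.re_sum, ← Finset.sum_sub_distrib]
    refine Finset.sum_congr rfl fun j _ => ?_
    rw [Complex.re_sum, ← Finset.sum_sub_distrib]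
    exact Finset.sum_congr rfl fun k _ => by rw [sq, Complex.mul_re]; ring
  have iff1 : (Matrix.fromRows V₁ V₂ * (Matrix.fromRows V₁ V₂)ᵀ =
      (A / 2) • (1 : Matrix (Fin d ⊕ Fin d) (Fin d ⊕ Fin d) ℝ)) ↔
      ∑ j, ∑ k, (cip (fun i => V i j) (fun i => V i k)) ^ 2 = 0 := key.trans hsum0.symm
  refine ⟨iff1, iff1.trans ?_⟩
  constructor
  · intro h
    have := congrArg Complex.re h
    rw [hre] at this
    simp at this
    linarith [this]
  · intro h
    rw [Complex.ext_iff]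
    constructor
    · rw [hre]; simp [h]
    · rw [him]; simp
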